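/- Let p and q be prime numbers with q odd, let r be an integer with q dividing r² + p, let D be a negative integer with −D < p, and let w, x, y, z be integers satisfying (as rational numbers) 2w + x = −D and (w + x/2)² + (p/4)·y² + q·(x/2 + z·r/q)² + p·q·(y/2 + z/q)² = (D² − D)/4. Then y = 0 and q·x² + 4·r·x·z + (4·(r² + p)/q)·z² = −D. -/

import Mathlib

/-- Let `p, q` be primes with `q` odd, `r` an integer with `q ∣ r² + p`, `D` a negative
integer with `−D < p`, and `w, x, y, z` integers satisfying (in `ℚ`) `2w + x = −D` and
`(w + x/2)² + (p/4)y² + q(x/2 + zr/q)² + pq(y/2 + z/q)² = (D² − D)/4`. Then `y = 0` and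
`qx² + 4rxz + (4(r² + p)/q)z² = −D`. -/
theorem quaternion_trace_norm_equations (p q : ℕ) (hp : p.Prime) (hq : q.Prime)
    (hqodd : Odd q) (r : ℤ) (hdvd : (q : ℤ) ∣ r ^ 2 + (p : ℤ))
    (D : ℤ) (hD : D < 0) (hDp : -D < (p : ℤ))
    (w x y z : ℤ)
    (h1 : (2 * w + x : ℚ) = -(D : ℚ))
    (h2 : ((w : ℚ) + (x : ℚ) / 2) ^ 2 + ((p : ℚ) / 4) * (y : ℚ) ^ 2
        + (q : ℚ) * ((x : ℚ) / 2 + (z : ℚ) * (r : ℚ) / (q : ℚ)) ^ 2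
        + (p : ℚ) * (q : ℚ) * ((y : ℚ) / 2 + (z : ℚ) / (q : ℚ)) ^ 2
        = ((D : ℚ) ^ 2 - (D : ℚ)) / 4) :
    y = 0 ∧
      (q : ℚ) * (x : ℚ) ^ 2 + 4 * (r : ℚ) * (x : ℚ) * (z : ℚ)
        + (4 * ((r : ℚ) ^ 2 + (p : ℚ)) / (q : ℚ)) * (z : ℚ) ^ 2 = -(D : ℚ) := by

  have hq0 : (q : ℚ) ≠ 0 := by exact_mod_cast hq.ne_zero
  have hqpos : (0:ℚ) < q := by exact_mod_cast hq.pos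
  have hppos : (0:ℚ) < p := by exact_mod_cast hp.pos
  have key : (p:ℚ)*q*(y:ℚ)^2 + ((q:ℚ)*x+2*z*r)^2 + (p:ℚ)*((q:ℚ)*y+2*z)^2
      = -(D:ℚ)*q := by
    have h2' := h2
    field_simp at h2'
    have key' : (256*(q:ℚ)^3) * ((p:ℚ)*q*(y:ℚ)^2 + ((q:ℚ)*x+2*z*r)^2
        + (p:ℚ)*((q:ℚ)*y+2*z)^2) = (256*(q:ℚ)^3) * (-(D:ℚ)*q) := by
      linear_combination 64*(q:ℚ)^3*h2' - 256*(q:ℚ)^4*((2*(w:ℚ)+x) - (D:ℚ))*h1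
    exact mul_left_cancel₀ (by positivity) key'
  have hy : y = 0 := by
    have h3 : (p:ℚ)*q*(y:ℚ)^2 < (p:ℚ)*q := by
      have hD' : -(D:ℚ) < (p:ℚ) := by exact_mod_cast hDp
      nlinarith [sq_nonneg ((q:ℚ)*x+2*z*r), sq_nonneg ((q:ℚ)*y+2*z)]
    have : (y:ℚ)^2 < 1 := by
      have := (mul_lt_mul_iff_right₀ (by positivity : (0:ℚ) < (p:ℚ)*q)).mp
        (by linarith [h3] : (p:ℚ)*q*(y:ℚ)^2 < (p:ℚ)*q*1)
      linarith
    have : (y:ℤ)^2 < 1 := by exact_mod_cast this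
    nlinarith [sq_nonneg y]
  refine ⟨hy, ?_⟩
  subst hy
  push_cast at key
  field_simp
  linear_combination key
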